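/- Let L be a field equipped with a nonarchimedean multiplicative absolute value |·| : L → ℝ≥0 (so |ab| = |a||b| and |a+b| ≤ max(|a|,|b|)). For monic polynomials p, q ∈ L[z], the spectral value satisfies σ(p·q) = max{σ(p), σ(q)}. -/

import Mathlib

open Polynomial

/-- The spectral value of a monic polynomial `p(z) = z^n + c_1 z^{n-1} + ⋯ + c_n`
with respect to an absolute value `v`, namely `max_{1 ≤ i ≤ n} v(c_i)^(1/i)`
(the coefficient `c_i` sits in degree `n - i`). -/
noncomputable def spectralVal {L : Type*} [Field L] (v : L → NNReal)
    (p : Polynomial L) : NNReal :=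
  (Finset.range p.natDegree).sup fun j =>
    v (p.coeff j) ^ ((((p.natDegree - j : ℕ) : ℝ))⁻¹)

namespace SpectralValAux

lemma rpow_inv_le_iff {d : ℕ} (hd : d ≠ 0) (x B : NNReal) :
    x ^ ((d : ℝ)⁻¹) ≤ B ↔ x ≤ B ^ d := by
  have hd' : (0 : ℝ) < (d : ℝ) := by positivity
  rw [← NNReal.rpow_le_rpow_iff hd', ← NNReal.rpow_mul,
    inv_mul_cancel₀ hd'.ne', NNReal.rpow_one, NNReal.rpow_natCast]

lemma rpow_inv_lt_iff {d : ℕ} (hd : d ≠ 0) (x B : NNReal) :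
    x ^ ((d : ℝ)⁻¹) < B ↔ x < B ^ d := by
  have hd' : (0 : ℝ) < (d : ℝ) := by positivity
  rw [← NNReal.rpow_lt_rpow_iff hd', ← NNReal.rpow_mul,
    inv_mul_cancel₀ hd'.ne', NNReal.rpow_one, NNReal.rpow_natCast]

variable {L : Type*} [Field L] {v : L → NNReal}
  (hv0 : ∀ a, v a = 0 ↔ a = 0)
  (hvmul : ∀ a b, v (a * b) = v a * v b)
  (hvadd : ∀ a b, v (a + b) ≤ max (v a) (v b))

include hv0 hvmul in
lemma v_one : v 1 = 1 := by
  have h : v 1 * v 1 = v 1 * 1 := by rw [← hvmul, mul_one, mul_one]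
  have h1 : v 1 ≠ 0 := fun h' => one_ne_zero ((hv0 1).1 h')
  exact mul_left_cancel₀ h1 h

include hv0 hvmul in
lemma v_neg (a : L) : v (-a) = v a := by
  have h : ((v (-1 : L)) : ℝ) * v (-1 : L) = 1 := by
    have h := hvmul (-1) (-1)
    rw [neg_mul_neg, one_mul, v_one hv0 hvmul] at h
    exact_mod_cast h.symm
  have h2 : v (-1 : L) * v (-1 : L) = 1 := by
    have h := hvmul (-1) (-1)
    rw [neg_mul_neg, one_mul, v_one hv0 hvmul] at h
    exact h.symm
  have h1' : v (-1 : L) = 1 := by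
    rcases lt_trichotomy (v (-1 : L)) 1 with hlt | heq | hgt
    · have := mul_lt_mul'' hlt hlt (zero_le ..) (zero_le ..)
      rw [h2, one_mul] at this
      exact absurd this (lt_irrefl _)
    · exact heq
    · have := mul_lt_mul'' hgt hgt (zero_le ..) (zero_le ..)
      rw [h2, one_mul] at this
      exact absurd this (lt_irrefl _)
  rw [show -a = (-1) * a by ring, hvmul, h1', one_mul]

include hv0 hvadd in
lemma v_sum_le {α : Type*} (s : Finset α) (f : α → L) :
    v (∑ x ∈ s, f x) ≤ s.sup fun x => v (f x) := by
  induction s using Finset.cons_induction with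
  | empty => simp [(hv0 0).2 rfl]
  | cons a s ha ih =>
    rw [Finset.sum_cons, Finset.sup_cons]
    exact (hvadd _ _).trans (max_le_max le_rfl ih)

include hv0 hvmul hvadd in
lemma v_sum_eq {α : Type*} [DecidableEq α] (s : Finset α) (f : α → L) (x₀ : α)
    (hx₀ : x₀ ∈ s) (hpos : 0 < v (f x₀))
    (hdom : ∀ x ∈ s, x ≠ x₀ → v (f x) < v (f x₀)) :
    v (∑ x ∈ s, f x) = v (f x₀) := by
  rw [← Finset.add_sum_erase s f hx₀]
  set R := ∑ x ∈ s.erase x₀, f x with hR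
  have hrest : v R < v (f x₀) := by
    refine lt_of_le_of_lt (v_sum_le hv0 hvadd _ _) ?_
    rw [Finset.sup_lt_iff hpos]
    intro x hx
    exact hdom x (Finset.mem_of_mem_erase hx) (Finset.ne_of_mem_erase hx)
  refine le_antisymm ((hvadd _ _).trans (max_le le_rfl hrest.le)) ?_
  by_contra hlt
  push_neg at hlt
  have h2 : v (f x₀) ≤ max (v (f x₀ + R)) (v R) := by
    have := hvadd (f x₀ + R) (-R)
    rwa [add_neg_cancel_right, v_neg hv0 hvmul] at this
  exact absurd (h2.trans_lt (max_lt hlt hrest)) (lt_irrefl _)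

end SpectralValAux

open SpectralValAux in
/-- For a nonarchimedean multiplicative absolute value, the spectral value of a
product of monic polynomials is the maximum of the spectral values. -/
theorem spectralVal_mul {L : Type*} [Field L] (v : L → NNReal)
    (hv0 : ∀ a, v a = 0 ↔ a = 0)
    (hvmul : ∀ a b, v (a * b) = v a * v b)
    (hvadd : ∀ a b, v (a + b) ≤ max (v a) (v b))
    (p q : Polynomial L) (hp : p.Monic) (hq : q.Monic) :
    spectralVal v (p * q) = max (spectralVal v p) (spectralVal v q) := by
  set n := p.natDegree with hn
  set m := q.natDegree with hm
  set B := max (spectralVal v p) (spectralVal v q) with hB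
  have hnm : (p * q).natDegree = n + m := hp.natDegree_mul hq
  -- coefficient bounds
  have hpb : ∀ i, v (p.coeff i) ≤ B ^ (n - i) := by
    intro i
    rcases lt_trichotomy i n with hi | hi | hi
    · have h1 : v (p.coeff i) ^ (((n - i : ℕ) : ℝ))⁻¹ ≤ spectralVal v p :=
        Finset.le_sup (f := fun j => v (p.coeff j) ^ ((((p.natDegree - j : ℕ) : ℝ))⁻¹))
          (Finset.mem_range.2 hi)
      exact (rpow_inv_le_iff (by omega) _ _).1 (h1.trans (le_max_left _ _))
    · rw [hi, hp.coeff_natDegree, v_one hv0 hvmul, Nat.sub_self, pow_zero]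
    · rw [coeff_eq_zero_of_natDegree_lt hi, (hv0 0).2 rfl]
      exact zero_le ..
  have hqb : ∀ j, v (q.coeff j) ≤ B ^ (m - j) := by
    intro j
    rcases lt_trichotomy j m with hj | hj | hj
    · have h1 : v (q.coeff j) ^ (((m - j : ℕ) : ℝ))⁻¹ ≤ spectralVal v q :=
        Finset.le_sup (f := fun j => v (q.coeff j) ^ ((((q.natDegree - j : ℕ) : ℝ))⁻¹))
          (Finset.mem_range.2 hj)
      exact (rpow_inv_le_iff (by omega) _ _).1 (h1.trans (le_max_right _ _))
    · rw [hj, hq.coeff_natDegree, v_one hv0 hvmul, Nat.sub_self, pow_zero]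
    · rw [coeff_eq_zero_of_natDegree_lt hj, (hv0 0).2 rfl]
      exact zero_le ..
  -- upper bound
  have hub : spectralVal v (p * q) ≤ B := by
    apply Finset.sup_le
    intro k hk
    rw [Finset.mem_range, hnm] at hk
    rw [hnm, rpow_inv_le_iff (by omega)]
    rw [coeff_mul]
    refine le_trans (v_sum_le hv0 hvadd _ _) (Finset.sup_le ?_)
    rintro ⟨i, j⟩ hij
    rw [Finset.HasAntidiagonal.mem_antidiagonal] at hij
    rw [hvmul]
    by_cases hi : n < i
    · rw [coeff_eq_zero_of_natDegree_lt hi, (hv0 0).2 rfl, zero_mul]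
      exact zero_le ..
    by_cases hj : m < j
    · rw [coeff_eq_zero_of_natDegree_lt hj, (hv0 0).2 rfl, mul_zero]
      exact zero_le ..
    push_neg at hi hj
    calc v (p.coeff i) * v (q.coeff j) ≤ B ^ (n - i) * B ^ (m - j) :=
          mul_le_mul' (hpb i) (hqb j)
      _ = B ^ (n + m - k) := by rw [← pow_add]; congr 1; omega
  rcases eq_or_lt_of_le (zero_le (a := B)) with hB0 | hB0
  · have h0 : spectralVal v (p * q) = 0 := le_antisymm (hub.trans hB0.ge) (zero_le ..)
    rw [h0, hB0]
  -- lower bound, B > 0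
  · have hPp : ∃ i, i ≤ n ∧ v (p.coeff i) = B ^ (n - i) := by
      exact ⟨n, le_rfl, by rw [hp.coeff_natDegree, v_one hv0 hvmul, Nat.sub_self, pow_zero]⟩
    have hPq : ∃ j, j ≤ m ∧ v (q.coeff j) = B ^ (m - j) := by
      exact ⟨m, le_rfl, by rw [hq.coeff_natDegree, v_one hv0 hvmul, Nat.sub_self, pow_zero]⟩
    set i₀ := Nat.find hPp with hi₀def
    set j₀ := Nat.find hPq with hj₀def
    obtain ⟨hi₀n, hi₀eq⟩ := Nat.find_spec hPp
    obtain ⟨hj₀m, hj₀eq⟩ := Nat.find_spec hPq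
    have hi₀min : ∀ i < i₀, v (p.coeff i) < B ^ (n - i) := by
      intro i hi
      exact lt_of_le_of_ne (hpb i) (fun h => Nat.find_min hPp hi ⟨by omega, h⟩)
    have hj₀min : ∀ j < j₀, v (q.coeff j) < B ^ (m - j) := by
      intro j hj
      exact lt_of_le_of_ne (hqb j) (fun h => Nat.find_min hPq hj ⟨by omega, h⟩)
    set k := i₀ + j₀ with hk
    have hklt : k < n + m := by
      rcases lt_or_eq_of_le (Nat.add_le_add hi₀n hj₀m) with h | h
      · exact h
      exfalso
      have hin : i₀ = n := by omega
      have hjm : j₀ = m := by omega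
      have hsp : spectralVal v p < B := by
        rw [spectralVal]
        rw [Finset.sup_lt_iff hB0]
        intro i hi
        rw [Finset.mem_range] at hi
        rw [← hn, rpow_inv_lt_iff (by omega)]
        exact hi₀min i (by omega)
      have hsq : spectralVal v q < B := by
        rw [spectralVal]
        rw [Finset.sup_lt_iff hB0]
        intro j hj
        rw [Finset.mem_range] at hj
        rw [← hm, rpow_inv_lt_iff (by omega)]
        exact hj₀min j (by omega)
      exact absurd (max_lt hsp hsq) (by rw [← hB]; exact lt_irrefl B)
    have hcoeff : v ((p * q).coeff k) = B ^ (n + m - k) := by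
      rw [coeff_mul]
      have hmain : v (p.coeff i₀ * q.coeff j₀) = B ^ (n + m - k) := by
        rw [hvmul, hi₀eq, hj₀eq, ← pow_add]
        congr 1; omega
      have := v_sum_eq hv0 hvmul hvadd (Finset.HasAntidiagonal.antidiagonal k)
        (fun x => p.coeff x.1 * q.coeff x.2) (i₀, j₀)
        (Finset.HasAntidiagonal.mem_antidiagonal.2 rfl)
        (by rw [hmain]; exact pow_pos hB0 _) ?_
      · rw [this, hmain]
      rintro ⟨i, j⟩ hij hne
      rw [Finset.HasAntidiagonal.mem_antidiagonal] at hij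
      rw [hmain]
      simp only []
      by_cases hi : n < i
      · rw [hvmul, coeff_eq_zero_of_natDegree_lt hi, (hv0 0).2 rfl, zero_mul]
        exact pow_pos hB0 _
      by_cases hj : m < j
      · rw [hvmul, coeff_eq_zero_of_natDegree_lt hj, (hv0 0).2 rfl, mul_zero]
        exact pow_pos hB0 _
      push_neg at hi hj
      have hij' : i ≠ i₀ := by
        intro h; apply hne; simp [h]; omega
      rw [hvmul]
      have hexp : (n - i) + (m - j) = n + m - k := by omega
      rcases lt_or_gt_of_ne hij' with hlt | hgt
      · calc v (p.coeff i) * v (q.coeff j) ≤ v (p.coeff i) * B ^ (m - j) :=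
              mul_le_mul' le_rfl (hqb j)
          _ < B ^ (n - i) * B ^ (m - j) :=
              mul_lt_mul_of_pos_right (hi₀min i hlt) (pow_pos hB0 _)
          _ = B ^ (n + m - k) := by rw [← pow_add, hexp]
      · have hjlt : j < j₀ := by omega
        calc v (p.coeff i) * v (q.coeff j) ≤ B ^ (n - i) * v (q.coeff j) :=
              mul_le_mul' (hpb i) le_rfl
          _ < B ^ (n - i) * B ^ (m - j) :=
              mul_lt_mul_of_pos_left (hj₀min j hjlt) (pow_pos hB0 _)
          _ = B ^ (n + m - k) := by rw [← pow_add, hexp]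
    have hlb : B ≤ spectralVal v (p * q) := by
      have hmem : k ∈ Finset.range (p * q).natDegree := by
        rw [Finset.mem_range, hnm]; exact hklt
      refine le_trans ?_ (Finset.le_sup (f := fun j =>
        v ((p * q).coeff j) ^ ((((p * q).natDegree - j : ℕ) : ℝ))⁻¹) hmem)
      show B ≤ v ((p * q).coeff k) ^ ((((p * q).natDegree - k : ℕ) : ℝ))⁻¹
      rw [hnm, hcoeff, NNReal.pow_rpow_inv_natCast _ (by omega)]
    exact le_antisymm hub hlb
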